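/- For j = 1, …, m define d_j = (β_j − α_j)P_j/π and b_j = [(β_j − α_j)P_j/(4π α_j)]^{1/2} (here 4π is the area of the 2-dimensional unit sphere), and then set σ_j = d_j/(4 b_j²) and ρ_j = 4π b_j². Then for every j = 1, …, m one has σ_j = α_j and ρ_j = (β_j − α_j)P_j/α_j, and for every k = 1, …, m one has 1 + ∑_{j=1}^m σ_j ρ_j/(σ_j − β_k) = 0; that is, each β_k is a root of the function 𝓕(λ) = 1 + ∑_{j=1}^m σ_j ρ_j/(σ_j − λ). -/

import Mathlib

open Real

section Aux

open Polynomial Finset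

private lemma gaps_poly_key (m : ℕ) (α β : ℕ → ℝ)
    (hinj : Set.InjOn α (Finset.range m)) (k : ℕ) (hk : k < m) :
    ∏ i ∈ Finset.range m, (β k - α i)
      = ∑ j ∈ Finset.range m, (-(∏ i ∈ Finset.range m, (α j - β i)))
          * ∏ i ∈ (Finset.range m).erase j, ((α j - α i)⁻¹ * (β k - α i)) := by
  set f : ℝ[X] := ∏ i ∈ Finset.range m, (X - C (β i)) with hf
  set g : ℝ[X] := ∏ i ∈ Finset.range m, (X - C (α i)) with hg
  have hmf : f.Monic := monic_prod_of_monic _ _ fun i _ => monic_X_sub_C _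
  have hmg : g.Monic := monic_prod_of_monic _ _ fun i _ => monic_X_sub_C _
  have hdf : f.degree = (m : ℕ) := by
    rw [hf, degree_prod]; simp [degree_X_sub_C]
  have hdg : g.degree = (m : ℕ) := by
    rw [hg, degree_prod]; simp [degree_X_sub_C]
  have hdeg : (g - f).degree < (Finset.range m).card := by
    rw [Finset.card_range]
    have := degree_sub_lt (hdg.trans hdf.symm) hmg.ne_zero
      (hmg.leadingCoeff.trans hmf.leadingCoeff.symm)
    rwa [hdg] at this
  have hint := Lagrange.eq_interpolate hinj hdeg
  have hev := congrArg (Polynomial.eval (β k)) hint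
  rw [Lagrange.interpolate_apply, eval_finset_sum] at hev
  have hgev : ∀ x : ℝ, g.eval x = ∏ i ∈ Finset.range m, (x - α i) := by
    intro x; rw [hg, eval_prod]; simp
  have hfev : ∀ x : ℝ, f.eval x = ∏ i ∈ Finset.range m, (x - β i) := by
    intro x; rw [hf, eval_prod]; simp
  have hfk : f.eval (β k) = 0 := by
    rw [hfev]; exact Finset.prod_eq_zero (Finset.mem_range.mpr hk) (by ring)
  have hL : (g - f).eval (β k) = ∏ i ∈ Finset.range m, (β k - α i) := by
    rw [eval_sub, hfk, hgev, sub_zero]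
  rw [hL] at hev
  rw [hev]
  refine Finset.sum_congr rfl fun j hj => ?_
  have hgj : g.eval (α j) = 0 := by
    rw [hgev]; exact Finset.prod_eq_zero hj (by ring)
  rw [eval_mul, eval_C, eval_sub, hgj, hfev, zero_sub]
  congr 1
  rw [Lagrange.basis, eval_prod]
  refine Finset.prod_congr rfl fun i hi => ?_
  rw [Lagrange.basisDivisor]; simp

private lemma gaps_num_key (m : ℕ) (α β : ℕ → ℝ)
    (hαβ : ∀ j, j < m → α j < β j)
    (hmono : ∀ i j, i < j → j < m → β i < α j)
    (k : ℕ) (hk : k < m) :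
    1 + ∑ j ∈ Finset.range m,
      (β j - α j) * (∏ i ∈ (Finset.range m).erase j, (β i - α j) / (α i - α j))
        / (α j - β k) = 0 := by
  have hαmono : ∀ i j, i < j → j < m → α i < α j := fun i j hij hjm =>
    (hαβ i (hij.trans hjm)).trans (hmono i j hij hjm)
  have hinj : Set.InjOn α (Finset.range m) := by
    intro i hi j hj hij
    simp only [Finset.coe_range, Set.mem_Iio] at hi hj
    rcases lt_trichotomy i j with h | h | h
    · exact absurd hij (ne_of_lt (hαmono i j h hj))
    · exact h
    · exact absurd hij.symm (ne_of_lt (hαmono j i h hi))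
  have hαβk : ∀ j, j < m → α j - β k ≠ 0 := by
    intro j hj
    rcases le_or_gt j k with h | h
    · refine sub_ne_zero.mpr (ne_of_lt ?_)
      rcases eq_or_lt_of_le h with rfl | h
      · exact hαβ j hj
      · exact (hαmono j k h hk).trans (hαβ k hk)
    · exact sub_ne_zero.mpr (ne_of_gt (hmono k j h hj))
  have hD : ∏ i ∈ Finset.range m, (β k - α i) ≠ 0 := by
    refine Finset.prod_ne_zero_iff.mpr fun i hi => ?_
    have := hαβk i (Finset.mem_range.mp hi)
    intro h; apply this; linarith [sub_eq_zero.mp h]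
  have hkey := gaps_poly_key m α β hinj k hk
  set D := ∏ i ∈ Finset.range m, (β k - α i) with hDdef
  have hterm : ∀ j ∈ Finset.range m,
      (β j - α j) * (∏ i ∈ (Finset.range m).erase j, (β i - α j) / (α i - α j))
          / (α j - β k)
        = -(((-(∏ i ∈ Finset.range m, (α j - β i)))
          * ∏ i ∈ (Finset.range m).erase j, ((α j - α i)⁻¹ * (β k - α i))) / D) := by
    intro j hj
    have hjm := Finset.mem_range.mp hj
    have hA : ∏ i ∈ (Finset.range m).erase j, (β i - α j) / (α i - α j)
        = (∏ i ∈ (Finset.range m).erase j, (α j - β i))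
          * ∏ i ∈ (Finset.range m).erase j, (α j - α i)⁻¹ := by
      rw [← Finset.prod_mul_distrib]
      refine Finset.prod_congr rfl fun i hi => ?_
      rw [div_eq_mul_inv, show α i - α j = -(α j - α i) by ring, inv_neg]; ring
    have hfull : ∏ i ∈ Finset.range m, (α j - β i)
        = (α j - β j) * ∏ i ∈ (Finset.range m).erase j, (α j - β i) :=
      (Finset.mul_prod_erase _ _ hj).symm
    have hDsplit : D = (β k - α j) * ∏ i ∈ (Finset.range m).erase j, (β k - α i) :=
      (Finset.mul_prod_erase _ _ hj).symm
    have hsplit2 : ∏ i ∈ (Finset.range m).erase j, ((α j - α i)⁻¹ * (β k - α i))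
        = (∏ i ∈ (Finset.range m).erase j, (α j - α i)⁻¹)
          * ∏ i ∈ (Finset.range m).erase j, (β k - α i) := Finset.prod_mul_distrib
    have hCc : ∏ i ∈ (Finset.range m).erase j, (β k - α i) ≠ 0 := by
      refine Finset.prod_ne_zero_iff.mpr fun i hi => ?_
      have := hαβk i (Finset.mem_range.mp (Finset.mem_of_mem_erase hi))
      intro h; apply this; linarith [sub_eq_zero.mp h]
    have h1 : α j - β k ≠ 0 := hαβk j hjm
    have h2 : β k - α j ≠ 0 := fun h => h1 (by linarith [sub_eq_zero.mp h])
    rw [hA, hfull, hDsplit, hsplit2, neg_mul, neg_div, neg_neg]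
    rw [div_eq_div_iff h1 (mul_ne_zero h2 hCc)]
    ring
  rw [Finset.sum_congr rfl hterm]
  rw [Finset.sum_neg_distrib, ← Finset.sum_div, ← hkey, div_self hD]
  ring

end Aux

/-!
STATEMENT 1: the two-dimensional analogue: d_j = (β_j − α_j)P_j/π,
b_j = [(β_j − α_j)P_j/(4πα_j)]^{1/2}, σ_j = d_j/(4b_j²), ρ_j = 4πb_j².
Then σ_j = α_j, ρ_j = (β_j − α_j)P_j/α_j, and each β_k is a root of
𝓕(λ) = 1 + ∑_j σ_j ρ_j/(σ_j − λ).
-/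

theorem gaps_parameters_choice_dim_two
    (m : ℕ) (hm : 1 ≤ m)
    (α β : ℕ → ℝ)
    (hα0 : 0 < α 0)
    (hαβ : ∀ j, j < m → α j < β j)
    (hβα : ∀ j, j + 1 < m → β j < α (j + 1))
    (P d b σ ρ : ℕ → ℝ)
    (hP : ∀ j, P j = ∏ i ∈ (Finset.range m).erase j, (β i - α j) / (α i - α j))
    (hd : ∀ j, d j = (β j - α j) * P j / π)
    (hb : ∀ j, b j = Real.sqrt ((β j - α j) * P j / (4 * π * α j)))
    (hσ : ∀ j, σ j = d j / (4 * b j ^ 2))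
    (hρ : ∀ j, ρ j = 4 * π * b j ^ 2) :
    (∀ j, j < m → σ j = α j ∧ ρ j = (β j - α j) * P j / α j) ∧
    (∀ k, k < m → 1 + ∑ j ∈ Finset.range m, σ j * ρ j / (σ j - β k) = 0) := by
  -- chain lemma
  have hmono : ∀ i j, i < j → j < m → β i < α j := by
    intro i j hij
    induction j with
    | zero => omega
    | succ n ih =>
      intro hnm
      rcases Nat.lt_succ_iff_lt_or_eq.mp hij with h | h
      · have h1 : β i < α n := ih h (by omega)
        have h2 : α n < β n := hαβ n (by omega)
        exact h1.trans (h2.trans (hβα n hnm))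
      · subst h; exact hβα i hnm
  have hαmono : ∀ i j, i < j → j < m → α i < α j := fun i j hij hjm =>
    (hαβ i (hij.trans hjm)).trans (hmono i j hij hjm)
  have hαpos : ∀ j, j < m → 0 < α j := by
    intro j hj
    rcases Nat.eq_zero_or_pos j with rfl | h
    · exact hα0
    · exact hα0.trans (hαmono 0 j h hj)
  -- part 1
  have part1 : ∀ j, j < m → σ j = α j ∧ ρ j = (β j - α j) * P j / α j := by
    intro j hj
    have hαj := hαpos j hj
    have hPpos : 0 < P j := by
      rw [hP]
      refine Finset.prod_pos fun i hi => ?_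
      obtain ⟨hne, hi⟩ := Finset.mem_erase.mp hi
      have him := Finset.mem_range.mp hi
      rcases lt_or_gt_of_ne hne with h | h
      · exact div_pos_of_neg_of_neg (sub_neg.mpr (hmono i j h hj))
          (sub_neg.mpr (hαmono i j h hj))
      · exact div_pos (sub_pos.mpr ((hαmono j i h him).trans (hαβ i him)))
          (sub_pos.mpr (hαmono j i h him))
    have hq : (0:ℝ) < (β j - α j) * P j := mul_pos (sub_pos.mpr (hαβ j hj)) hPpos
    have hb2 : b j ^ 2 = (β j - α j) * P j / (4 * π * α j) := by
      rw [hb, sq_sqrt]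
      positivity
    constructor
    · rw [hσ, hd, hb2]
      field_simp
      exact div_self (sub_pos.mpr (hαβ j hj)).ne'
    · rw [hρ, hb2]
      field_simp
  refine ⟨part1, fun k hk => ?_⟩
  have hsum : ∀ j ∈ Finset.range m, σ j * ρ j / (σ j - β k)
      = (β j - α j) * (∏ i ∈ (Finset.range m).erase j, (β i - α j) / (α i - α j))
          / (α j - β k) := by
    intro j hj
    have hjm := Finset.mem_range.mp hj
    obtain ⟨hσj, hρj⟩ := part1 j hjm
    rw [hσj, hρj, ← hP j]
    rw [mul_div_assoc', mul_comm (α j), mul_div_assoc, div_self (ne_of_gt (hαpos j hjm)),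
      mul_one]
  rw [Finset.sum_congr rfl hsum]
  exact gaps_num_key m α β hαβ hmono k hk
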